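/- Consider the equation E : 2x − y + 2z = 0 over [n], and define the coloring f : [n] → {−1, 1} by f(t) = −1 if t ≤ n/8 or t > n/2, and f(t) = 1 if n/8 < t ≤ n/2. Then the total number of solutions in [n]³ is n²/8 + O(n), the number of monochromatic solutions under f is n²/512 + O(n), and consequently limsup_{n→∞} μ_E([n]) ≤ 1/64 < 1/4, so E is uncommon over [n]. -/

import Mathlib

open Finset Filter

/-- The set of solutions `(x, y, z) ∈ [n]³` to `a·x + b·y + c·z = 0`. -/
def solns (a b c : ℤ) (n : ℕ) : Finset (ℕ × ℕ × ℕ) :=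
  ((Finset.Icc 1 n) ×ˢ (Finset.Icc 1 n) ×ˢ (Finset.Icc 1 n)).filter
    fun p => a * (p.1 : ℤ) + b * (p.2.1 : ℤ) + c * (p.2.2 : ℤ) = 0

/-- The set of solutions that are monochromatic under the coloring `f`. -/
def mono (a b c : ℤ) (n : ℕ) (f : ℕ → Bool) : Finset (ℕ × ℕ × ℕ) :=
  (solns a b c n).filter fun p => f p.1 = f p.2.1 ∧ f p.1 = f p.2.2

/-- `μ_E([n])`: the minimum, over 2-colorings of `[n]`, of the proportion of
monochromatic solutions. -/
noncomputable def muMin (a b c : ℤ) (n : ℕ) : ℝ :=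
  sInf {r : ℝ | ∃ f : ℕ → Bool,
    r = ((mono a b c n f).card : ℝ) / ((solns a b c n).card : ℝ)}

/-- The coloring of `[n]` for `2x − y + 2z = 0`: `t` is blue (`false`, i.e. `−1`)
iff `t ≤ n/8` or `t > n/2`, and red (`true`, i.e. `1`) iff `n/8 < t ≤ n/2`. -/
def color2 (n : ℕ) : ℕ → Bool := fun t =>
  if 8 * t ≤ n ∨ n < 2 * t then false else true

def emb212 : (Σ _ : ℕ, ℕ) ↪ ℕ × ℕ × ℕ :=
  ⟨fun p => (p.1, 2*(p.1+p.2), p.2), by rintro ⟨a,b⟩ ⟨c,d⟩ h; simp_all⟩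

lemma solns_eq (n : ℕ) :
    solns 2 (-1) 2 n = ((Icc 1 n).sigma (fun x => Icc 1 (n/2 - x))).map emb212 := by
  ext ⟨x, y, z⟩
  simp only [solns, emb212, Finset.mem_filter, Finset.mem_product, Finset.mem_map,
    Finset.mem_sigma, Finset.mem_Icc, Function.Embedding.coeFn_mk, Prod.mk.injEq]
  constructor
  · rintro ⟨⟨hx, hy, hz⟩, heq⟩
    have hy2 : y = 2 * (x + z) := by omega
    refine ⟨⟨x, z⟩, (?_ : (1 ≤ x ∧ x ≤ n) ∧ 1 ≤ z ∧ z ≤ n / 2 - x),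
      (?_ : (x, 2 * (x + z), z) = (x, y, z))⟩
    · omega
    · subst hy2; rfl
  · rintro ⟨⟨a, b⟩, hm, rfl, rfl, rfl⟩
    dsimp only at hm ⊢
    exact ⟨by omega, by push_cast; ring⟩

lemma mono_eq (n : ℕ) :
    mono 2 (-1) 2 n (color2 n) =
      ((Icc 1 n).sigma (fun x => Icc 1 (n/16 - x))).map emb212 := by
  ext ⟨x, y, z⟩
  simp only [mono, solns, emb212, Finset.mem_filter, Finset.mem_product, Finset.mem_map,
    Finset.mem_sigma, Finset.mem_Icc, Function.Embedding.coeFn_mk, Prod.mk.injEq]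
  simp only [color2]
  constructor
  · rintro ⟨⟨⟨hx, hy, hz⟩, heq⟩, hc1, hc2⟩
    have hy2 : y = 2 * (x + z) := by omega
    refine ⟨⟨x, z⟩, (?_ : (1 ≤ x ∧ x ≤ n) ∧ 1 ≤ z ∧ z ≤ n / 16 - x),
      (?_ : (x, 2 * (x + z), z) = (x, y, z))⟩
    · split_ifs at hc1 hc2 <;> omega
    · subst hy2; rfl
  · rintro ⟨⟨a, b⟩, hm, rfl, rfl, rfl⟩
    dsimp only at hm ⊢
    refine ⟨⟨by omega, by push_cast; ring⟩, ?_, ?_⟩ <;>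
      · split_ifs <;> first | rfl | omega

lemma sum_tri (n m : ℕ) (h : m ≤ n) :
    ∑ x ∈ Icc 1 n, (m - x) = ∑ k ∈ range m, k := by
  have h1 : ∑ x ∈ Icc 1 n, (m - x) = ∑ x ∈ Icc 1 m, (m - x) := by
    rw [← Finset.sum_subset (Finset.Icc_subset_Icc_right h)]
    intro x hx hx'
    simp only [Finset.mem_Icc] at hx hx'
    omega
  rw [h1, show Icc 1 m = Ico 1 (m+1) by rfl, Finset.sum_Ico_eq_sum_range]
  simp only [Nat.add_sub_cancel]
  calc ∑ i ∈ range m, (m - (1 + i)) = ∑ i ∈ range m, (m - 1 - i) := by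
        apply Finset.sum_congr rfl; intro i hi; omega
    _ = ∑ i ∈ range m, i := Finset.sum_range_reflect id m

lemma card_sig (n m : ℕ) (h : m ≤ n) :
    (((Icc 1 n).sigma (fun x => Icc 1 (m - x))).map emb212).card * 2 = m * (m - 1) := by
  rw [Finset.card_map, Finset.card_sigma]
  have : ∑ x ∈ Icc 1 n, (Icc 1 (m - x)).card = ∑ x ∈ Icc 1 n, (m - x) := by
    apply Finset.sum_congr rfl; intro x _; rw [Nat.card_Icc]; omega
  rw [this, sum_tri n m h, Finset.sum_range_id_mul_two]

lemma solns_card (n : ℕ) : (solns 2 (-1) 2 n).card * 2 = (n/2) * (n/2 - 1) := by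
  rw [solns_eq]; exact card_sig n (n/2) (by omega)

lemma mono_card (n : ℕ) :
    (mono 2 (-1) 2 n (color2 n)).card * 2 = (n/16) * (n/16 - 1) := by
  rw [mono_eq]; exact card_sig n (n/16) (by omega)

theorem two_one_two_uncommon :
    (∃ K : ℝ, ∀ n : ℕ,
      |((solns 2 (-1) 2 n).card : ℝ) - (n : ℝ) ^ 2 / 8| ≤ K * n) ∧
    (∃ K : ℝ, ∀ n : ℕ,
      |((mono 2 (-1) 2 n (color2 n)).card : ℝ) - (n : ℝ) ^ 2 / 512| ≤ K * n) ∧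
    limsup (fun n => muMin 2 (-1) 2 n) atTop ≤ 1 / 64 ∧
    (1 : ℝ) / 64 < 1 / 4 := by
  refine ⟨⟨2, fun n => ?_⟩, ⟨2, fun n => ?_⟩, ?_, by norm_num⟩
  · -- total count
    set m := n / 2 with hm
    have hc := solns_card n
    rcases Nat.eq_zero_or_pos m with h0 | h1
    · have hA : (solns 2 (-1) 2 n).card = 0 := by rw [hm] at h0; rw [h0] at hc; omega
      have hn : n ≤ 1 := by omega
      rw [hA]
      interval_cases n <;> norm_num [abs_le]
    · have hsub : m - 1 + 1 = m := by omega
      have hcR : 2 * ((solns 2 (-1) 2 n).card : ℝ) = (m : ℝ) * ((m : ℝ) - 1) := by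
        have := congrArg (Nat.cast : ℕ → ℝ) hc
        rw [← hm] at this
        push_cast [Nat.cast_sub h1] at this
        linarith
      have hb1 : 2 * (m : ℝ) ≤ n := by exact_mod_cast Nat.le_of_lt_succ (by omega)
      have hb2 : (n : ℝ) ≤ 2 * m + 1 := by exact_mod_cast (by omega : n ≤ 2 * m + 1)
      have hm1 : (1 : ℝ) ≤ m := by exact_mod_cast h1
      rw [abs_le]
      constructor <;> nlinarith [sq_nonneg ((n : ℝ) - 2 * m)]
  · -- mono count
    set m := n / 16 with hm
    have hc := mono_card n
    rcases Nat.eq_zero_or_pos m with h0 | h1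
    · have hA : (mono 2 (-1) 2 n (color2 n)).card = 0 := by rw [hm] at h0; rw [h0] at hc; omega
      have hn : n ≤ 15 := by omega
      rw [hA, abs_le]
      have hn' : (n : ℝ) ≤ 15 := by exact_mod_cast hn
      have hn0 : (0 : ℝ) ≤ n := Nat.cast_nonneg n
      constructor <;> nlinarith
    · have hcR : 2 * ((mono 2 (-1) 2 n (color2 n)).card : ℝ) = (m : ℝ) * ((m : ℝ) - 1) := by
        have := congrArg (Nat.cast : ℕ → ℝ) hc
        rw [← hm] at this
        push_cast [Nat.cast_sub h1] at this
        linarith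
      have hb1 : 16 * (m : ℝ) ≤ n := by exact_mod_cast (by omega : 16 * m ≤ n)
      have hb2 : (n : ℝ) ≤ 16 * m + 15 := by exact_mod_cast (by omega : n ≤ 16 * m + 15)
      have hm1 : (1 : ℝ) ≤ m := by exact_mod_cast h1
      rw [abs_le]
      constructor <;> nlinarith [sq_nonneg ((n : ℝ) - 16 * m)]
  · -- limsup bound
    have key : ∀ n : ℕ, muMin 2 (-1) 2 n ≤ 1 / 64 := by
      intro n
      have hc1 := solns_card n
      have hc2 := mono_card n
      set A := (solns 2 (-1) 2 n).card with hA
      set B := (mono 2 (-1) 2 n (color2 n)).card with hB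
      have hratio : 64 * B ≤ A := by
        set m := n / 2
        set M := n / 16
        have h8 : 8 * M ≤ m := by omega
        rcases Nat.eq_zero_or_pos M with h0 | h1
        · have hB0 : B = 0 := by rw [h0] at hc2; simp at hc2; omega
          omega
        · have : 64 * (M * (M - 1)) ≤ m * (m - 1) := by
            calc 64 * (M * (M - 1)) = (8 * M) * (8 * (M - 1)) := by ring
              _ ≤ m * (m - 1) := Nat.mul_le_mul h8 (by omega)
          omega
      have hle : muMin 2 (-1) 2 n ≤ (B : ℝ) / (A : ℝ) := by
        apply csInf_le
        · exact ⟨0, by rintro r ⟨f, rfl⟩; positivity⟩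
        · exact ⟨color2 n, rfl⟩
      refine hle.trans ?_
      rcases Nat.eq_zero_or_pos A with h0 | h1
      · have : B = 0 := by omega
        simp [this]
      · rw [div_le_iff₀ (by exact_mod_cast h1)]
        have : (64 * B : ℝ) ≤ A := by exact_mod_cast hratio
        linarith
    have hnonneg : ∀ n : ℕ, (0:ℝ) ≤ muMin 2 (-1) 2 n := by
      intro n
      apply Real.sInf_nonneg
      rintro r ⟨f, rfl⟩
      positivity
    exact limsup_le_of_le (isCoboundedUnder_le_of_le atTop hnonneg)
      (Eventually.of_forall key)
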